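/- Let Λ be a finite set with |Λ| ≥ 1 and let J_1, …, J_M (M ≥ 1) be 3-element subsets of Λ. Suppose every element of Λ belongs to at most D of the sets J_1, …, J_M (D ≥ 1). Let Y_1, …, Y_r be independent uniform samples from Λ and M̂ := (|Λ|/(3r)) · Σ_{i=1}^{r} Σ_{j=1}^{M} 1[Y_i ∈ J_j]. Then for any ε, δ > 0, if r > (1/(18ε²)) · (|Λ|·D/M)² · log(2/δ), then Pr(|M̂ − M| ≥ M·ε) ≤ δ. (Theorem 7, concentration bound of MoCHy-A⁺ for closed h-motifs; the paper instantiates D = d_max[t], the maximum number of adjacent hyperedges over all hyperedges occurring in instances of h-motif t.) -/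

import Mathlib

open scoped Classical

lemma hoeffding_scalar {p : ℝ} (hp0 : 0 ≤ p) (hp1 : p ≤ 1) (s : ℝ) :
    (1 - p) * Real.exp (-p * s) + p * Real.exp ((1 - p) * s) ≤ Real.exp (s ^ 2 / 8) := by

  set q : ℝ := 1 - p with hq
  clear_value q
  have hq0 : 0 ≤ q := by simp only [hq]; linarith
  set g : ℝ → ℝ := fun x => q * Real.exp (-p * x) + p * Real.exp (q * x) with hgdef
  set g1 : ℝ → ℝ := fun x => p * q * (Real.exp (q * x) - Real.exp (-p * x)) with hg1def
  set g2 : ℝ → ℝ := fun x => p * q * (q * Real.exp (q * x) + p * Real.exp (-p * x)) with hg2def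
  clear_value g g1 g2
  have hgpos : ∀ x, 0 < g x := by
    intro x
    rcases eq_or_lt_of_le hp0 with h | h
    · simp [hgdef, ← h, hq]
    · have h1 : 0 < p * Real.exp (q * x) := mul_pos h (Real.exp_pos _)
      have h2 : 0 ≤ q * Real.exp (-p * x) := mul_nonneg hq0 (Real.exp_pos _).le
      simp only [hgdef]; linarith
  have hexp : ∀ c x : ℝ, HasDerivAt (fun x : ℝ => Real.exp (c * x)) (Real.exp (c * x) * c) x := by
    intro c x
    have h := ((hasDerivAt_id x).const_mul c).exp
    simp only [id_eq, mul_one] at h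
    exact h
  have hg : ∀ x, HasDerivAt g (g1 x) x := by
    intro x
    have := ((hexp (-p) x).const_mul q).add ((hexp q x).const_mul p)
    rw [hgdef, hg1def]
    exact this.congr_deriv (by beta_reduce; ring)
  have hg1 : ∀ x, HasDerivAt g1 (g2 x) x := by
    intro x
    have := ((hexp q x).sub (hexp (-p) x)).const_mul (p * q)
    rw [hg1def, hg2def]
    exact this.congr_deriv (by beta_reduce; ring)
  set φ1 : ℝ → ℝ := fun x => g1 x / g x - x / 4 with hφ1def
  have hφ1 : ∀ x, HasDerivAt φ1 ((g2 x * g x - g1 x * g1 x) / g x ^ 2 - 1 / 4) x := by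
    intro x
    have hdiv := (hg1 x).div (hg x) (hgpos x).ne'
    have hid : HasDerivAt (fun x : ℝ => x / 4) (1 / 4) x := by
      simpa using (hasDerivAt_id x).div_const 4
    exact hdiv.sub hid
  have hφ1deriv_nonpos : ∀ x, (g2 x * g x - g1 x * g1 x) / g x ^ 2 - 1 / 4 ≤ 0 := by
    intro x
    have hkey : g2 x * g x - g1 x * g1 x = p * q * (Real.exp (-p * x) * Real.exp (q * x)) := by
      simp only [hgdef, hg1def, hg2def, hq]; ring
    have h4 : 4 * (p * q * (Real.exp (-p * x) * Real.exp (q * x))) ≤ g x ^ 2 := by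
      have hsq : 0 ≤ (q * Real.exp (-p * x) - p * Real.exp (q * x)) ^ 2 := sq_nonneg _
      simp only [hgdef]; nlinarith [hsq]
    have hg2pos : (0:ℝ) < g x ^ 2 := pow_pos (hgpos x) 2
    rw [hkey, sub_nonpos, div_le_iff₀ hg2pos]
    have hgx : g x = q * Real.exp (-p * x) + p * Real.exp (q * x) := by rw [hgdef]
    nlinarith [h4, hgx]
  have hφ1anti : Antitone φ1 := by
    apply antitone_of_deriv_nonpos
    · intro x; exact (hφ1 x).differentiableAt
    · intro x; rw [(hφ1 x).deriv]; exact hφ1deriv_nonpos x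
  have hφ10 : φ1 0 = 0 := by simp [hφ1def, hg1def]
  set φ : ℝ → ℝ := fun x => Real.log (g x) - x ^ 2 / 8 with hφdef
  have hφ : ∀ x, HasDerivAt φ (φ1 x) x := by
    intro x
    have hlog := (hg x).log (hgpos x).ne'
    have hsq : HasDerivAt (fun x : ℝ => x ^ 2 / 8) (x / 4) x := by
      have := ((hasDerivAt_id x).pow 2).div_const 8
      exact (((hasDerivAt_id' x).pow 2).div_const 8).congr_deriv (by norm_num <;> ring)
    exact hlog.sub hsq
  have hφdiff : Differentiable ℝ φ := fun x => (hφ x).differentiableAt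
  have hφ0 : φ 0 = 0 := by simp [hφdef, hgdef, hq]
  have hφle : φ s ≤ 0 := by
    rcases le_or_gt 0 s with hx | hx
    · have hA : AntitoneOn φ (Set.Ici 0) := by
        apply antitoneOn_of_deriv_nonpos (convex_Ici 0) hφdiff.continuous.continuousOn
          (hφdiff.differentiableOn)
        intro y hy
        rw [interior_Ici] at hy
        rw [(hφ y).deriv]
        calc φ1 y ≤ φ1 0 := hφ1anti (le_of_lt hy)
          _ = 0 := hφ10
      calc φ s ≤ φ 0 := hA (Set.self_mem_Ici) hx hx
        _ = 0 := hφ0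
    · have hA : MonotoneOn φ (Set.Iic 0) := by
        apply monotoneOn_of_deriv_nonneg (convex_Iic 0) hφdiff.continuous.continuousOn
          (hφdiff.differentiableOn)
        intro y hy
        rw [interior_Iic] at hy
        rw [(hφ y).deriv]
        calc (0:ℝ) = φ1 0 := hφ10.symm
          _ ≤ φ1 y := hφ1anti (le_of_lt hy)
      calc φ s ≤ φ 0 := hA (Set.mem_Iic.mpr hx.le) (Set.self_mem_Iic) hx.le
        _ = 0 := hφ0
  have : Real.log (g s) ≤ s ^ 2 / 8 := by
    have := hφle; simp only [hφdef] at this; linarith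
  have := (Real.log_le_iff_le_exp (hgpos s)).mp this
  simpa only [hgdef, hq, add_comm] using this

lemma mgf_bound {β : Type*} [Fintype β] [Nonempty β] (Y : β → ℝ) (hsum : ∑ b, Y b = 0)
    (a B : ℝ) (hB : 0 < B) (hbd : ∀ b, Y b ∈ Set.Icc a (a + B)) (l : ℝ) :
    ∑ b, Real.exp (l * Y b) ≤ (Fintype.card β : ℝ) * Real.exp (l ^ 2 * B ^ 2 / 8) := by

  have hne : (Finset.univ : Finset β).Nonempty := Finset.univ_nonempty
  have ha0 : a ≤ 0 := by
    by_contra h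
    push_neg at h
    have : 0 < ∑ b, Y b := Finset.sum_pos (fun b _ => lt_of_lt_of_le h (hbd b).1) hne
    linarith
  have haB : 0 ≤ a + B := by
    by_contra h
    push_neg at h
    have : ∑ b, Y b < 0 := Finset.sum_neg (fun b _ => lt_of_le_of_lt (hbd b).2 h) hne
    linarith
  set p : ℝ := -a / B with hp
  have hp0 : 0 ≤ p := by
    rw [hp]; apply div_nonneg (by linarith) hB.le
  have hp1 : p ≤ 1 := by
    rw [hp, div_le_one hB]; linarith
  have hptw : ∀ b, Real.exp (l * Y b) ≤
      ((a + B - Y b) / B) * Real.exp (l * a) + ((Y b - a) / B) * Real.exp (l * (a + B)) := by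
    intro b
    have h1 : 0 ≤ (a + B - Y b) / B := div_nonneg (by linarith [(hbd b).2]) hB.le
    have h2 : 0 ≤ (Y b - a) / B := div_nonneg (by linarith [(hbd b).1]) hB.le
    have h3 : (a + B - Y b) / B + (Y b - a) / B = 1 := by field_simp; ring
    have := convexOn_exp.2 (Set.mem_univ (l * a)) (Set.mem_univ (l * (a + B))) h1 h2 h3
    simp only [smul_eq_mul] at this
    refine le_trans (le_of_eq ?_) this
    congr 1
    rw [div_mul_eq_mul_div, div_mul_eq_mul_div, ← add_div, eq_div_iff hB.ne']
    ring
  have hsum1 : ∑ b, ((a + B - Y b) / B) = (Fintype.card β : ℝ) * ((a + B) / B) := by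
    rw [← Finset.sum_div, Finset.sum_sub_distrib, hsum, sub_zero, Finset.sum_const,
      Finset.card_univ, nsmul_eq_mul, mul_div_assoc]
  have hsum2 : ∑ b, ((Y b - a) / B) = (Fintype.card β : ℝ) * (-a / B) := by
    rw [← Finset.sum_div, Finset.sum_sub_distrib, hsum, zero_sub, Finset.sum_const,
      Finset.card_univ, nsmul_eq_mul]
    ring
  calc ∑ b, Real.exp (l * Y b)
      ≤ ∑ b, (((a + B - Y b) / B) * Real.exp (l * a) + ((Y b - a) / B) * Real.exp (l * (a + B))) :=
        Finset.sum_le_sum fun b _ => hptw b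
    _ = (Fintype.card β : ℝ) * (((a + B) / B) * Real.exp (l * a) + p * Real.exp (l * (a + B))) := by
        rw [Finset.sum_add_distrib, ← Finset.sum_mul, ← Finset.sum_mul, hsum1, hsum2, hp]
        ring
    _ = (Fintype.card β : ℝ) * ((1 - p) * Real.exp (-p * (l * B)) + p * Real.exp ((1 - p) * (l * B))) := by
        have h1 : (a + B) / B = 1 - p := by rw [hp]; field_simp; ring
        have h2 : l * a = -p * (l * B) := by rw [hp]; field_simp
        have h3 : l * (a + B) = (1 - p) * (l * B) := by rw [hp]; field_simp; ring
        rw [h1, h2, h3]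
    _ ≤ (Fintype.card β : ℝ) * Real.exp ((l * B) ^ 2 / 8) := by
        apply mul_le_mul_of_nonneg_left (hoeffding_scalar hp0 hp1 (l * B))
        positivity
    _ = (Fintype.card β : ℝ) * Real.exp (l ^ 2 * B ^ 2 / 8) := by rw [mul_pow]

lemma chernoff_count {β : Type*} [Fintype β] [Nonempty β] {r : ℕ} (hrpos : 0 < r)
    (Y : β → ℝ) (hsum : ∑ b, Y b = 0) (a B : ℝ) (hB : 0 < B)
    (hbd : ∀ b, Y b ∈ Set.Icc a (a + B)) (t : ℝ) (ht : 0 < t) :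
    ((Finset.univ.filter fun y : Fin r → β => t ≤ ∑ i, Y (y i)).card : ℝ)
      ≤ (Fintype.card β : ℝ) ^ r * Real.exp (-(2 * t ^ 2) / ((r : ℝ) * B ^ 2)) := by

  have hr0 : (0:ℝ) < (r : ℝ) := Nat.cast_pos.mpr hrpos
  set l : ℝ := 4 * t / ((r : ℝ) * B ^ 2) with hl
  have hlpos : 0 < l := by positivity
  set A : ℝ := (r : ℝ) * (l ^ 2 * B ^ 2 / 8) with hA
  have h2 : ∑ y : Fin r → β, Real.exp (l * ∑ i, Y (y i)) = (∑ b, Real.exp (l * Y b)) ^ r := by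
    have hy : ∀ y : Fin r → β, Real.exp (l * ∑ i, Y (y i)) = ∏ i, Real.exp (l * Y (y i)) := by
      intro y; rw [Finset.mul_sum, Real.exp_sum]
    simp_rw [hy]
    have hps := Finset.prod_univ_sum (fun _ : Fin r => (Finset.univ : Finset β))
      (fun _ b => Real.exp (l * Y b))
    rw [Fintype.piFinset_univ] at hps
    rw [← hps]
    simp [Finset.prod_const]
  have h3 : (∑ b, Real.exp (l * Y b)) ^ r ≤ (Fintype.card β : ℝ) ^ r * Real.exp A := by
    have hb := mgf_bound Y hsum a B hB hbd l
    have hnn : 0 ≤ ∑ b, Real.exp (l * Y b) :=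
      Finset.sum_nonneg fun b _ => (Real.exp_pos _).le
    calc (∑ b, Real.exp (l * Y b)) ^ r
        ≤ ((Fintype.card β : ℝ) * Real.exp (l ^ 2 * B ^ 2 / 8)) ^ r :=
          pow_le_pow_left₀ hnn hb r
      _ = (Fintype.card β : ℝ) ^ r * Real.exp A := by
          rw [mul_pow, ← Real.exp_nat_mul, hA]
  have h1 : ((Finset.univ.filter fun y : Fin r → β => t ≤ ∑ i, Y (y i)).card : ℝ) *
      Real.exp (l * t) ≤ (Fintype.card β : ℝ) ^ r * Real.exp A := by
    calc ((Finset.univ.filter fun y : Fin r → β => t ≤ ∑ i, Y (y i)).card : ℝ) *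
        Real.exp (l * t)
        = ∑ _y ∈ Finset.univ.filter fun y : Fin r → β => t ≤ ∑ i, Y (y i),
            Real.exp (l * t) := by rw [Finset.sum_const, nsmul_eq_mul]
      _ ≤ ∑ y ∈ Finset.univ.filter fun y : Fin r → β => t ≤ ∑ i, Y (y i),
            Real.exp (l * ∑ i, Y (y i)) := by
          apply Finset.sum_le_sum
          intro y hy
          rw [Finset.mem_filter] at hy
          exact Real.exp_le_exp.mpr (mul_le_mul_of_nonneg_left hy.2 hlpos.le)
      _ ≤ ∑ y : Fin r → β, Real.exp (l * ∑ i, Y (y i)) :=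
          Finset.sum_le_sum_of_subset_of_nonneg (Finset.filter_subset _ _)
            (fun y _ _ => (Real.exp_pos _).le)
      _ = (∑ b, Real.exp (l * Y b)) ^ r := h2
      _ ≤ (Fintype.card β : ℝ) ^ r * Real.exp A := h3
  have hexp_eq : A - l * t = -(2 * t ^ 2) / ((r : ℝ) * B ^ 2) := by
    rw [hA, hl]; field_simp; ring
  have hfinal : ((Finset.univ.filter fun y : Fin r → β => t ≤ ∑ i, Y (y i)).card : ℝ)
      ≤ (Fintype.card β : ℝ) ^ r * Real.exp A / Real.exp (l * t) := by
    rw [le_div_iff₀ (Real.exp_pos _)]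
    exact h1
  calc ((Finset.univ.filter fun y : Fin r → β => t ≤ ∑ i, Y (y i)).card : ℝ)
      ≤ (Fintype.card β : ℝ) ^ r * Real.exp A / Real.exp (l * t) := hfinal
    _ = (Fintype.card β : ℝ) ^ r * Real.exp (A - l * t) := by
        rw [mul_div_assoc, ← Real.exp_sub]
    _ = (Fintype.card β : ℝ) ^ r * Real.exp (-(2 * t ^ 2) / ((r : ℝ) * B ^ 2)) := by
        rw [hexp_eq]

lemma hoeffding_two_sided {β : Type*} [Fintype β] [Nonempty β] {r : ℕ} (hrpos : 0 < r)
    (Y : β → ℝ) (hsum : ∑ b, Y b = 0) (a B : ℝ) (hB : 0 < B)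
    (hbd : ∀ b, Y b ∈ Set.Icc a (a + B)) (t : ℝ) (ht : 0 < t) :
    ((Finset.univ.filter fun y : Fin r → β => t ≤ |∑ i, Y (y i)|).card : ℝ)
      ≤ 2 * (Fintype.card β : ℝ) ^ r * Real.exp (-(2 * t ^ 2) / ((r : ℝ) * B ^ 2)) := by
  have hsub : (Finset.univ.filter fun y : Fin r → β => t ≤ |∑ i, Y (y i)|) ⊆
      (Finset.univ.filter fun y : Fin r → β => t ≤ ∑ i, Y (y i)) ∪
        (Finset.univ.filter fun y : Fin r → β => t ≤ ∑ i, (-Y) (y i)) := by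
    intro y hy
    rw [Finset.mem_filter] at hy
    rcases le_abs.mp hy.2 with h | h
    · exact Finset.mem_union_left _ (Finset.mem_filter.mpr ⟨Finset.mem_univ _, h⟩)
    · refine Finset.mem_union_right _ (Finset.mem_filter.mpr ⟨Finset.mem_univ _, ?_⟩)
      simpa [Finset.sum_neg_distrib] using h
  have hY' : ∀ b, (-Y) b ∈ Set.Icc (-(a + B)) (-(a + B) + B) := by
    intro b
    have := hbd b
    constructor
    · simp only [Pi.neg_apply]; linarith [this.2]
    · simp only [Pi.neg_apply]; linarith [this.1]
  have hsum' : ∑ b, (-Y) b = 0 := by simp [hsum]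
  have h1 := chernoff_count hrpos Y hsum a B hB hbd t ht
  have h2 := chernoff_count hrpos (-Y) hsum' (-(a + B)) B hB hY' t ht
  have hcard : ((Finset.univ.filter fun y : Fin r → β => t ≤ |∑ i, Y (y i)|).card : ℝ)
      ≤ ((Finset.univ.filter fun y : Fin r → β => t ≤ ∑ i, Y (y i)).card : ℝ) +
        ((Finset.univ.filter fun y : Fin r → β => t ≤ ∑ i, (-Y) (y i)).card : ℝ) := by
    have := le_trans (Finset.card_le_card hsub) (Finset.card_union_le _ _)
    exact_mod_cast this
  linarith

/-- **Theorem 7 (concentration bound of MoCHy-A⁺ for closed h-motifs).**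
`β` is the finite hyperwedge set `Λ` (with `|Λ| ≥ 1`), `J 1, …, J M` (`M ≥ 1`)
are 3-element subsets of `Λ`, and every element of `Λ` belongs to at most
`D ≥ 1` of them.  The `r` i.i.d. uniform samples are encoded by the uniform
distribution on `Fin r → β`, and the probability of the deviation event is the
number of sample vectors realizing it divided by `|Λ|^r`.  If
`r > (1/(18ε²)) · (|Λ|·D/M)² · log(2/δ)`, then `Pr(|M̂ − M| ≥ M·ε) ≤ δ`. -/
theorem mochyAplus_concentration_closed {β : Type*} [Fintype β] [DecidableEq β] [Nonempty β]
    {M r D : ℕ} (hM : 1 ≤ M) (hD : 1 ≤ D)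
    (J : Fin M → Finset β) (hcard : ∀ j, (J j).card = 3)
    (hdeg : ∀ b : β, (Finset.univ.filter fun j => b ∈ J j).card ≤ D)
    (ε δ : ℝ) (hε : 0 < ε) (hδ : 0 < δ)
    (hr : (r : ℝ) >
      1 / (18 * ε ^ 2) * ((Fintype.card β : ℝ) * D / M) ^ 2 * Real.log (2 / δ)) :
    ((Finset.univ.filter fun y : Fin r → β =>
        |((Fintype.card β : ℝ) / (3 * r)) *
            (∑ i : Fin r, ∑ j : Fin M, if y i ∈ J j then (1 : ℝ) else 0) - M|
          ≥ M * ε).card : ℝ)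
      / (Fintype.card β : ℝ) ^ r ≤ δ := by
  have hN0 : (0:ℝ) < (Fintype.card β : ℝ) := by exact_mod_cast Fintype.card_pos
  have hNr0 : (0:ℝ) < (Fintype.card β : ℝ) ^ r := pow_pos hN0 r
  have hM0 : (0:ℝ) < (M : ℝ) := by exact_mod_cast hM
  have hD0 : (0:ℝ) < (D : ℝ) := by exact_mod_cast hD
  by_cases hδ2 : 2 ≤ δ
  · -- trivial case: probability ≤ 1 ≤ δ
    rw [div_le_iff₀ hNr0]
    have h1 : ((Finset.univ.filter fun y : Fin r → β =>
        |((Fintype.card β : ℝ) / (3 * r)) *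
            (∑ i : Fin r, ∑ j : Fin M, if y i ∈ J j then (1 : ℝ) else 0) - M|
          ≥ M * ε).card : ℝ) ≤ ((Finset.univ : Finset (Fin r → β)).card : ℝ) := by
      exact_mod_cast Finset.card_le_card (Finset.filter_subset _ _)
    have h2 : ((Finset.univ : Finset (Fin r → β)).card : ℝ) = (Fintype.card β : ℝ) ^ r := by
      rw [Finset.card_univ]
      push_cast [Fintype.card_fun, Fintype.card_fin]
      ring
    calc ((Finset.univ.filter _).card : ℝ) ≤ (Fintype.card β : ℝ) ^ r := h2 ▸ h1
      _ = 1 * (Fintype.card β : ℝ) ^ r := (one_mul _).symm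
      _ ≤ δ * (Fintype.card β : ℝ) ^ r := by
          apply mul_le_mul_of_nonneg_right (by linarith) hNr0.le
  · push_neg at hδ2
    have hlogpos : 0 < Real.log (2 / δ) := by
      apply Real.log_pos
      rw [lt_div_iff₀ hδ]; linarith
    have hr0 : (0:ℝ) < (r : ℝ) := by
      refine lt_of_lt_of_le ?_ hr.le
      positivity
    have hrpos : 0 < r := by exact_mod_cast hr0
    -- the count function and its properties
    set c : β → ℝ := fun b => ((Finset.univ.filter fun j => b ∈ J j).card : ℝ) with hc
    have hcsum : ∑ b, c b = 3 * M := by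
      simp only [hc]
      rw [← Nat.cast_sum]
      norm_cast
      have : ∀ b, (Finset.univ.filter fun j => b ∈ J j).card
          = ∑ j : Fin M, if b ∈ J j then 1 else 0 := by
        intro b; rw [Finset.sum_boole]; norm_cast
      rw [Finset.sum_congr rfl fun b _ => this b, Finset.sum_comm]
      have : ∀ j : Fin M, (∑ b : β, if b ∈ J j then 1 else 0) = 3 := by
        intro j
        rw [Finset.sum_boole]
        norm_cast
        rw [Finset.filter_mem_eq_inter, Finset.univ_inter]
        exact hcard j
      rw [Finset.sum_congr rfl fun j _ => this j, Finset.sum_const, Finset.card_univ,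
        Fintype.card_fin, smul_eq_mul, mul_comm]
    set μ : ℝ := 3 * M / (Fintype.card β : ℝ) with hμ
    have hμ0 : 0 ≤ μ := by positivity
    have hμD : μ ≤ D := by
      rw [hμ, div_le_iff₀ hN0]
      have h1 : ∑ b, c b ≤ ∑ b : β, (D:ℝ) := by
        apply Finset.sum_le_sum
        intro b _
        simp only [hc]
        exact_mod_cast hdeg b
      rw [hcsum] at h1
      simpa [Finset.sum_const, Finset.card_univ, mul_comm] using h1
    set Y : β → ℝ := fun b => c b - μ with hY
    have hsumY : ∑ b, Y b = 0 := by
      simp only [hY]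
      rw [Finset.sum_sub_distrib, hcsum, Finset.sum_const, Finset.card_univ, nsmul_eq_mul, hμ]
      field_simp
      ring
    have hbd : ∀ b, Y b ∈ Set.Icc (-μ) (-μ + (D:ℝ)) := by
      intro b
      constructor
      · simp only [hY]
        have : (0:ℝ) ≤ c b := by simp only [hc]; positivity
        linarith
      · simp only [hY]
        have : c b ≤ (D:ℝ) := by simp only [hc]; exact_mod_cast hdeg b
        linarith
    set t : ℝ := 3 * r * M * ε / (Fintype.card β : ℝ) with ht
    have ht0 : 0 < t := by positivity
    -- rewrite the event
    have hevent : (Finset.univ.filter fun y : Fin r → β =>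
        |((Fintype.card β : ℝ) / (3 * r)) *
            (∑ i : Fin r, ∑ j : Fin M, if y i ∈ J j then (1 : ℝ) else 0) - M|
          ≥ M * ε) = (Finset.univ.filter fun y : Fin r → β => t ≤ |∑ i, Y (y i)|) := by
      apply Finset.filter_congr
      intro y _
      have hS : (∑ i : Fin r, ∑ j : Fin M, if y i ∈ J j then (1 : ℝ) else 0)
          = ∑ i, c (y i) := by
        apply Finset.sum_congr rfl
        intro i _
        simp only [hc]
        rw [Finset.sum_boole]
      have hYS : ∑ i, Y (y i) = (∑ i, c (y i)) - r * μ := by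
        simp only [hY]
        rw [Finset.sum_sub_distrib, Finset.sum_const, Finset.card_univ, Fintype.card_fin,
          nsmul_eq_mul]
      have hcoef : (0:ℝ) < (Fintype.card β : ℝ) / (3 * r) := by positivity
      have hkey : ((Fintype.card β : ℝ) / (3 * r)) *
          (∑ i : Fin r, ∑ j : Fin M, if y i ∈ J j then (1 : ℝ) else 0) - M
          = ((Fintype.card β : ℝ) / (3 * r)) * (∑ i, Y (y i)) := by
        rw [hS, hYS, mul_sub]
        have : ((Fintype.card β : ℝ) / (3 * r)) * ((r:ℝ) * μ) = M := by
          rw [hμ]; field_simp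
        rw [this]
      rw [ge_iff_le, hkey, abs_mul, abs_of_pos hcoef]
      have hct : (Fintype.card β : ℝ) / (3 * r) * t = (M:ℝ) * ε := by
        rw [ht]; field_simp
      constructor
      · intro h
        have hinv : (0:ℝ) ≤ 3 * (r:ℝ) / (Fintype.card β : ℝ) := by positivity
        have h2 := mul_le_mul_of_nonneg_left h hinv
        calc t = 3 * (r:ℝ) / (Fintype.card β : ℝ) * ((M:ℝ) * ε) := by
              rw [ht]; field_simp
          _ ≤ 3 * (r:ℝ) / (Fintype.card β : ℝ) *
              ((Fintype.card β : ℝ) / (3 * r) * |∑ i, Y (y i)|) := h2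
          _ = |∑ i, Y (y i)| := by field_simp
      · intro h
        calc (M:ℝ) * ε = (Fintype.card β : ℝ) / (3 * r) * t := hct.symm
          _ ≤ (Fintype.card β : ℝ) / (3 * r) * |∑ i, Y (y i)| :=
              mul_le_mul_of_nonneg_left h hcoef.le
    rw [hevent]
    have hmain := hoeffding_two_sided hrpos Y hsumY (-μ) (D:ℝ) hD0 hbd t ht0
    rw [div_le_iff₀ hNr0]
    -- exponent comparison
    have hexp : Real.exp (-(2 * t ^ 2) / ((r : ℝ) * (D:ℝ) ^ 2)) ≤ δ / 2 := by
      have harg : Real.log (2 / δ) ≤ 2 * t ^ 2 / ((r : ℝ) * (D:ℝ) ^ 2) := by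
        have hA : 2 * t ^ 2 / ((r : ℝ) * (D:ℝ) ^ 2)
            = 18 * ε ^ 2 * ((M:ℝ) / ((Fintype.card β : ℝ) * (D:ℝ))) ^ 2 * (r:ℝ) := by
          rw [ht]; field_simp; ring
        rw [hA]
        have hfac : (0:ℝ) < 18 * ε ^ 2 * ((M:ℝ) / ((Fintype.card β : ℝ) * (D:ℝ))) ^ 2 := by
          positivity
        have := mul_le_mul_of_nonneg_left hr.le hfac.le
        calc Real.log (2 / δ)
            = 18 * ε ^ 2 * ((M:ℝ) / ((Fintype.card β : ℝ) * (D:ℝ))) ^ 2 *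
              (1 / (18 * ε ^ 2) * ((Fintype.card β : ℝ) * (D:ℝ) / (M:ℝ)) ^ 2 *
                Real.log (2 / δ)) := by
              field_simp
          _ ≤ 18 * ε ^ 2 * ((M:ℝ) / ((Fintype.card β : ℝ) * (D:ℝ))) ^ 2 * (r:ℝ) := this
      have h1 : Real.exp (-(2 * t ^ 2) / ((r : ℝ) * (D:ℝ) ^ 2))
          ≤ Real.exp (-Real.log (2 / δ)) := by
        apply Real.exp_le_exp.mpr
        rw [neg_div]
        linarith
      have h2 : Real.exp (-Real.log (2 / δ)) = δ / 2 := by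
        rw [Real.exp_neg, Real.exp_log (by positivity : (0:ℝ) < 2 / δ)]
        field_simp
      linarith [h2 ▸ h1]
    calc ((Finset.univ.filter fun y : Fin r → β => t ≤ |∑ i, Y (y i)|).card : ℝ)
        ≤ 2 * (Fintype.card β : ℝ) ^ r * Real.exp (-(2 * t ^ 2) / ((r : ℝ) * (D:ℝ) ^ 2)) :=
          hmain
      _ ≤ 2 * (Fintype.card β : ℝ) ^ r * (δ / 2) := by
          apply mul_le_mul_of_nonneg_left hexp (by positivity)
      _ = δ * (Fintype.card β : ℝ) ^ r := by ring
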